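/- arXiv:2408.06146 — 5 statements merged into one kernel-verified Lean document; each statement's English description precedes it below -/
import Mathlib

section
/- Let G be an undirected weighted graph on vertex set V, let G̃ be a degree-preserving reweighted subgraph of G, and let ε ≥ 0. If (1-ε)·L_G ≼ L_{G̃} ≼ (1+ε)·L_G and (1-ε)·U_G ≼ U_{G̃} ≼ (1+ε)·U_G, then for all vectors x, y ∈ ℝ^V: |xᵀ(A_G - A_{G̃})y| ≤ (ε/2)·(xᵀL_G x + yᵀL_G y) and |xᵀ(A_G - A_{G̃})y| ≤ (ε/2)·(xᵀU_G x + yᵀU_G y). -/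
open Matrix

/-- The diagonal matrix of weighted degrees (row sums) of an adjacency matrix. -/
def degMat {n : ℕ} (A : Matrix (Fin n) (Fin n) ℝ) : Matrix (Fin n) (Fin n) ℝ :=
  Matrix.diagonal (fun v => ∑ u, A v u)

/-- The Laplacian matrix `D - A` of an adjacency matrix. -/
def lap {n : ℕ} (A : Matrix (Fin n) (Fin n) ℝ) : Matrix (Fin n) (Fin n) ℝ :=
  degMat A - A

/-- The signless (unsigned) Laplacian matrix `D + A` of an adjacency matrix. -/
def signlessLap {n : ℕ} (A : Matrix (Fin n) (Fin n) ℝ) : Matrix (Fin n) (Fin n) ℝ :=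
  degMat A + A

/-- The number of edges of (the graph given by) an adjacency matrix:
the number of unordered pairs `{u,v}` with a nonzero entry. -/
noncomputable def edgeCount {n : ℕ} (B : Matrix (Fin n) (Fin n) ℝ) : ℕ :=
  ({p : Fin n × Fin n | p.1 < p.2 ∧ B p.1 p.2 ≠ 0}).ncard

/-- `B` is the adjacency matrix of a reweighted subgraph of the graph with adjacency matrix `A`. -/
def IsReweightedSubgraph {n : ℕ} (A B : Matrix (Fin n) (Fin n) ℝ) : Prop :=
  B.IsSymm ∧ (∀ u v, 0 ≤ B u v) ∧ (∀ u v, A u v = 0 → B u v = 0)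

/-- The reweighting `B` preserves the weighted degrees of `A`. -/
def DegreePreserving {n : ℕ} (A B : Matrix (Fin n) (Fin n) ℝ) : Prop :=
  ∀ v, ∑ u, B v u = ∑ u, A v u

lemma quad_expand {n : ℕ} (M : Matrix (Fin n) (Fin n) ℝ) (x y : Fin n → ℝ) :
    (x + y) ⬝ᵥ (M *ᵥ (x + y)) =
      x ⬝ᵥ (M *ᵥ x) + x ⬝ᵥ (M *ᵥ y) + y ⬝ᵥ (M *ᵥ x) + y ⬝ᵥ (M *ᵥ y) := by
  simp [mulVec_add, dotProduct_add, add_dotProduct]; ring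

lemma quad_expand_sub {n : ℕ} (M : Matrix (Fin n) (Fin n) ℝ) (x y : Fin n → ℝ) :
    (x - y) ⬝ᵥ (M *ᵥ (x - y)) =
      x ⬝ᵥ (M *ᵥ x) - x ⬝ᵥ (M *ᵥ y) - y ⬝ᵥ (M *ᵥ x) + y ⬝ᵥ (M *ᵥ y) := by
  simp [mulVec_sub, dotProduct_sub, sub_dotProduct]; ring

lemma key_bilin {n : ℕ} (M L : Matrix (Fin n) (Fin n) ℝ) (hM : M.IsSymm) (ε : ℝ)
    (h1 : (ε • L - M).PosSemidef) (h2 : (ε • L + M).PosSemidef) (x y : Fin n → ℝ) :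
    |x ⬝ᵥ (M *ᵥ y)| ≤ (ε / 2) * (x ⬝ᵥ (L *ᵥ x) + y ⬝ᵥ (L *ᵥ y)) := by
  have hq1 : ∀ z : Fin n → ℝ, z ⬝ᵥ (M *ᵥ z) ≤ ε * (z ⬝ᵥ (L *ᵥ z)) := by
    intro z
    have := h1.dotProduct_mulVec_nonneg z
    simp only [star_trivial, sub_mulVec, dotProduct_sub, smul_mulVec,
      dotProduct_smul, smul_eq_mul] at this
    linarith
  have hq2 : ∀ z : Fin n → ℝ, -(ε * (z ⬝ᵥ (L *ᵥ z))) ≤ z ⬝ᵥ (M *ᵥ z) := by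
    intro z
    have := h2.dotProduct_mulVec_nonneg z
    simp only [star_trivial, add_mulVec, dotProduct_add, smul_mulVec,
      dotProduct_smul, smul_eq_mul] at this
    linarith
  have hMe : ∀ i j, M i j = M j i := fun i j => (congrFun (congrFun hM i) j).symm
  have hsym : y ⬝ᵥ (M *ᵥ x) = x ⬝ᵥ (M *ᵥ y) := by
    simp only [dotProduct, mulVec, Finset.mul_sum]
    rw [Finset.sum_comm]
    apply Finset.sum_congr rfl; intro i _
    apply Finset.sum_congr rfl; intro j _
    rw [hMe i j]; ring
  rw [abs_le]
  constructor
  · have e1 := hq2 (x + y)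
    have e2 := hq1 (x - y)
    rw [quad_expand M, quad_expand L] at e1
    rw [quad_expand_sub M, quad_expand_sub L] at e2
    nlinarith [hsym]
  · have e1 := hq1 (x + y)
    have e2 := hq2 (x - y)
    rw [quad_expand M, quad_expand L] at e1
    rw [quad_expand_sub M, quad_expand_sub L] at e2
    nlinarith [hsym]

/-- Lemma 4.1: a degree-preserving reweighted subgraph whose Laplacian and signless
Laplacian are `ε`-spectral approximations is an `ε`-unit-circle approximation. -/
theorem uc_approximation_of_spectral_conditions
    (n : ℕ) (A B : Matrix (Fin n) (Fin n) ℝ) (ε : ℝ)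
    (hA_symm : A.IsSymm) (hA_nonneg : ∀ u v, 0 ≤ A u v) (hA_diag : ∀ v, A v v = 0)
    (hsub : IsReweightedSubgraph A B) (hdeg : DegreePreserving A B)
    (hε : 0 ≤ ε)
    (hL1 : (lap B - (1 - ε) • lap A).PosSemidef)
    (hL2 : ((1 + ε) • lap A - lap B).PosSemidef)
    (hU1 : (signlessLap B - (1 - ε) • signlessLap A).PosSemidef)
    (hU2 : ((1 + ε) • signlessLap A - signlessLap B).PosSemidef) :
    ∀ x y : Fin n → ℝ,
      |x ⬝ᵥ ((A - B) *ᵥ y)| ≤ (ε / 2) * (x ⬝ᵥ (lap A *ᵥ x) + y ⬝ᵥ (lap A *ᵥ y)) ∧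
      |x ⬝ᵥ ((A - B) *ᵥ y)| ≤
        (ε / 2) * (x ⬝ᵥ (signlessLap A *ᵥ x) + y ⬝ᵥ (signlessLap A *ᵥ y)) := by
  intro x y
  have hD : degMat B = degMat A := by
    unfold degMat
    exact congrArg Matrix.diagonal (funext hdeg)
  have hMsymm : (A - B).IsSymm := hA_symm.sub hsub.1
  have hlap1 : lap B - (1 - ε) • lap A = ε • lap A + (A - B) := by
    unfold lap; rw [hD]; module
  have hlap2 : (1 + ε) • lap A - lap B = ε • lap A - (A - B) := by
    unfold lap; rw [hD]; module
  have hsl1 : signlessLap B - (1 - ε) • signlessLap A = ε • signlessLap A - (A - B) := by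
    unfold signlessLap; rw [hD]; module
  have hsl2 : (1 + ε) • signlessLap A - signlessLap B = ε • signlessLap A + (A - B) := by
    unfold signlessLap; rw [hD]; module
  rw [hlap1] at hL1; rw [hlap2] at hL2; rw [hsl1] at hU1; rw [hsl2] at hU2
  exact ⟨key_bilin (A - B) (lap A) hMsymm ε hL2 hL1 x y,
    key_bilin (A - B) (signlessLap A) hMsymm ε hU1 hU2 x y⟩
end

section
/- Let G be a connected bipartite undirected weighted graph on n ≥ 2 vertices, let G̃ be a degree-preserving reweighted subgraph of G, let E := D_G − A_G·D_G⁻¹·A_G, and let ε ≥ 0. If −ε·E ≼ L_G − L_{G̃} ≼ ε·E, then for all x, y ∈ ℝ^V: |xᵀ(A_G − A_{G̃})y| ≤ (ε/2)·(xᵀE x + yᵀE y). -/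
open Matrix

/-- The inverse of the diagonal degree matrix (its pseudoinverse in general:
over `ℝ`, `(0:ℝ)⁻¹ = 0`). -/
noncomputable def degMatInv {n : ℕ} (A : Matrix (Fin n) (Fin n) ℝ) :
    Matrix (Fin n) (Fin n) ℝ :=
  Matrix.diagonal (fun v => (∑ u, A v u)⁻¹)

/-- `A` is the adjacency matrix of a bipartite graph. -/
def IsBipartiteAdj {n : ℕ} (A : Matrix (Fin n) (Fin n) ℝ) : Prop :=
  ∃ X : Set (Fin n), ∀ u v, ((u ∈ X ∧ v ∈ X) ∨ (u ∉ X ∧ v ∉ X)) → A u v = 0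

/-- `A` is the adjacency matrix of a connected graph. -/
def IsConnectedAdj {n : ℕ} (A : Matrix (Fin n) (Fin n) ℝ) : Prop :=
  (SimpleGraph.fromRel fun u v => 0 < A u v).Connected

/-- Lemma `fact:SV-conditions`: for a degree-preserving reweighted subgraph of a
connected bipartite graph, `-ε E ≼ L_G - L_G̃ ≼ ε E` implies `ε`-SV approximation. -/
theorem sv_approximation_of_loewner_condition
    (n : ℕ) (A B : Matrix (Fin n) (Fin n) ℝ) (ε : ℝ)
    (hn : 2 ≤ n)
    (hA_symm : A.IsSymm) (hA_nonneg : ∀ u v, 0 ≤ A u v) (hA_diag : ∀ v, A v v = 0)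
    (hbip : IsBipartiteAdj A) (hconn : IsConnectedAdj A)
    (hsub : IsReweightedSubgraph A B) (hdeg : DegreePreserving A B)
    (hε : 0 ≤ ε)
    (h1 : ((lap A - lap B) - (-ε) • (degMat A - A * degMatInv A * A)).PosSemidef)
    (h2 : (ε • (degMat A - A * degMatInv A * A) - (lap A - lap B)).PosSemidef) :
    ∀ x y : Fin n → ℝ,
      |x ⬝ᵥ ((A - B) *ᵥ y)| ≤
        (ε / 2) *
          (x ⬝ᵥ ((degMat A - A * degMatInv A * A) *ᵥ x) +
           y ⬝ᵥ ((degMat A - A * degMatInv A * A) *ᵥ y)) := by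
  intro x y
  set E : Matrix (Fin n) (Fin n) ℝ := degMat A - A * degMatInv A * A with hE
  set M : Matrix (Fin n) (Fin n) ℝ := A - B with hM
  have hDeq : degMat A = degMat B := by
    unfold degMat
    rw [show (fun v => ∑ u, A v u) = fun v => ∑ u, B v u from
      funext fun v => (hdeg v).symm]
  have hlap : lap A - lap B = -M := by
    simp only [lap, hDeq, hM]
    abel
  rw [hlap] at h1 h2
  have key1 : ∀ z : Fin n → ℝ, z ⬝ᵥ (M *ᵥ z) ≤ ε * (z ⬝ᵥ (E *ᵥ z)) := by
    intro z
    have := h1.dotProduct_mulVec_nonneg z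
    simp only [star_trivial, Matrix.sub_mulVec, Matrix.neg_mulVec,
      Matrix.smul_mulVec, dotProduct_sub, dotProduct_neg,
      dotProduct_smul, smul_eq_mul, neg_smul] at this
    linarith
  have key2 : ∀ z : Fin n → ℝ, -(z ⬝ᵥ (M *ᵥ z)) ≤ ε * (z ⬝ᵥ (E *ᵥ z)) := by
    intro z
    have := h2.dotProduct_mulVec_nonneg z
    simp only [star_trivial, Matrix.sub_mulVec, Matrix.neg_mulVec,
      Matrix.smul_mulVec, dotProduct_sub, dotProduct_neg,
      dotProduct_smul, smul_eq_mul] at this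
    linarith
  have hMsymm : Mᵀ = M := by
    rw [hM, Matrix.transpose_sub, hA_symm.eq, hsub.1.eq]
  have hsd : ∀ u v : Fin n → ℝ, u ⬝ᵥ (M *ᵥ v) = v ⬝ᵥ (M *ᵥ u) := by
    intro u v
    rw [Matrix.dotProduct_mulVec, ← Matrix.mulVec_transpose, hMsymm,
      dotProduct_comm]
  have expand : ∀ (P : Matrix (Fin n) (Fin n) ℝ) (u v : Fin n → ℝ),
      (u + v) ⬝ᵥ (P *ᵥ (u + v)) =
        u ⬝ᵥ (P *ᵥ u) + u ⬝ᵥ (P *ᵥ v) + v ⬝ᵥ (P *ᵥ u) + v ⬝ᵥ (P *ᵥ v) := by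
    intro P u v
    simp [Matrix.mulVec_add, dotProduct_add, add_dotProduct]
    ring
  have expand' : ∀ (P : Matrix (Fin n) (Fin n) ℝ) (u v : Fin n → ℝ),
      (u - v) ⬝ᵥ (P *ᵥ (u - v)) =
        u ⬝ᵥ (P *ᵥ u) - u ⬝ᵥ (P *ᵥ v) - v ⬝ᵥ (P *ᵥ u) + v ⬝ᵥ (P *ᵥ v) := by
    intro P u v
    simp [Matrix.mulVec_sub, dotProduct_sub, sub_dotProduct]
    ring
  have hk1 := key1 (x - y)
  have hk2 := key2 (x + y)
  have hk1' := key1 (x + y)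
  have hk2' := key2 (x - y)
  rw [expand' M x y, expand' E x y] at hk1 hk2'
  rw [expand M x y, expand E x y] at hk2 hk1'
  rw [hsd y x] at hk1 hk2 hk1' hk2'
  rw [abs_le]
  constructor <;> nlinarith [hk1, hk2, hk1', hk2']
end

section
/- Let A, B, C be symmetric real n×n matrices with A and B positive semidefinite. Then tr(A·C·B·C) ≤ tr(A·|C|)·tr(B·|C|). -/
open Matrix

/-- The matrix absolute value of a symmetric real matrix `C`:
the positive semidefinite square root of `CᴴC = C²`. -/
noncomputable def matAbs {n : ℕ} (C : Matrix (Fin n) (Fin n) ℝ) : Matrix (Fin n) (Fin n) ℝ :=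
  (Matrix.posSemidef_conjTranspose_mul_self C).1.eigenvectorUnitary.1 *
    diagonal ((↑) ∘ Real.sqrt ∘ (Matrix.posSemidef_conjTranspose_mul_self C).1.eigenvalues) *
    (star (Matrix.posSemidef_conjTranspose_mul_self C).1.eigenvectorUnitary : Matrix (Fin n) (Fin n) ℝ)

open Finset

lemma psd_diag_nonneg {n : ℕ} {M : Matrix (Fin n) (Fin n) ℝ} (hM : M.PosSemidef) (i : Fin n) :
    0 ≤ M i i := by
  simpa using hM.dotProduct_mulVec_nonneg (Pi.single i 1)

lemma psd_sq_entry_le {n : ℕ} {M : Matrix (Fin n) (Fin n) ℝ} (hM : M.PosSemidef)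
    (i j : Fin n) : (M i j) ^ 2 ≤ M i i * M j j := by
  rcases eq_or_ne i j with rfl | hij
  · rw [sq]
  · have hsym : M j i = M i j := by
      have := hM.1
      rw [Matrix.IsHermitian] at this
      calc M j i = Mᴴ j i := by rw [this]
        _ = M i j := by simp [Matrix.conjTranspose_apply]
    have key : ∀ t : ℝ, 0 ≤ M i i * (t * t) + (2 * M i j) * t + M j j := by
      intro t
      have h := hM.dotProduct_mulVec_nonneg (t • (Pi.single i 1 : Fin n → ℝ) + (Pi.single j 1 : Fin n → ℝ))
      simp only [star_trivial, Matrix.mulVec_add, Matrix.mulVec_smul,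
        Matrix.mulVec_single, mul_one, dotProduct_add, add_dotProduct,
        smul_dotProduct, dotProduct_smul, single_dotProduct,
        dotProduct_single, smul_eq_mul, one_mul] at h
      simp only [Matrix.col_apply, MulOpposite.smul_eq_mul_unop, MulOpposite.unop_op, mul_one] at h
      rw [hsym] at h; nlinarith [h]
    have := discrim_le_zero key
    rw [discrim] at this
    nlinarith [this]

lemma trace_mul_diag {n : ℕ} (M : Matrix (Fin n) (Fin n) ℝ) (d : Fin n → ℝ) :
    (M * Matrix.diagonal d).trace = ∑ i, M i i * d i := by
  simp [Matrix.trace, Matrix.diag, Matrix.mul_diagonal]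

lemma trace_mul_diag_mul_diag {n : ℕ} (M N : Matrix (Fin n) (Fin n) ℝ) (d : Fin n → ℝ) :
    (M * Matrix.diagonal d * N * Matrix.diagonal d).trace
      = ∑ i, ∑ j, M i j * d j * N j i * d i := by
  have key : ∀ i, (M * Matrix.diagonal d * N * Matrix.diagonal d) i i
      = ∑ j, M i j * d j * N j i * d i := by
    intro i
    rw [Matrix.mul_diagonal, Matrix.mul_apply, Finset.sum_mul]
    refine Finset.sum_congr rfl fun j _ => ?_
    rw [Matrix.mul_diagonal]
  exact Finset.sum_congr rfl fun i _ => key i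

/-- Lemma 2.4 (Lemma 10 of Reis–Rothvoss):
`tr(ACBC) ≤ tr(A|C|) · tr(B|C|)` for `A, B ⪰ 0` and symmetric `C`. -/
theorem trace_ACBC_le (n : ℕ) (A B C : Matrix (Fin n) (Fin n) ℝ)
    (hA : A.PosSemidef) (hB : B.PosSemidef) (hC : C.IsSymm) :
    (A * C * B * C).trace ≤ (A * matAbs C).trace * (B * matAbs C).trace := by
  have hH : C.IsHermitian := by
    rw [Matrix.IsHermitian, Matrix.conjTranspose]
    exact (Matrix.isHermitian_iff_isSymm.mpr hC :)
  set V : Matrix (Fin n) (Fin n) ℝ := (hH.eigenvectorUnitary : Matrix (Fin n) (Fin n) ℝ) with hV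
  set lam : Fin n → ℝ := hH.eigenvalues with hlam
  have hVV : V * star V = 1 := (Matrix.mem_unitaryGroup_iff).mp hH.eigenvectorUnitary.2
  have hVV' : star V * V = 1 := (Matrix.mem_unitaryGroup_iff').mp hH.eigenvectorUnitary.2
  have hspec : C = V * Matrix.diagonal lam * star V := by
    have := hH.spectral_theorem
    rwa [RCLike.ofReal_real_eq_id, Function.id_comp] at this
  set S : Matrix (Fin n) (Fin n) ℝ := V * Matrix.diagonal (fun i => |lam i|) * star V with hS
  have hSpsd : S.PosSemidef := by
    rw [hS, Matrix.star_eq_conjTranspose]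
    exact (Matrix.PosSemidef.diagonal (fun i => abs_nonneg (lam i))).mul_mul_conjTranspose_same V
  have hSsq : S ^ 2 = Cᴴ * C := by
    rw [hH.eq, hspec, hS, pow_two]
    calc V * Matrix.diagonal (fun i => |lam i|) * star V *
          (V * Matrix.diagonal (fun i => |lam i|) * star V)
        = V * (Matrix.diagonal (fun i => |lam i|) * ((star V * V) *
          (Matrix.diagonal (fun i => |lam i|) * star V))) := by
          simp only [Matrix.mul_assoc]
      _ = V * (Matrix.diagonal (fun i => |lam i|) * Matrix.diagonal (fun i => |lam i|)) * star V := by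
          rw [hVV']; simp only [Matrix.one_mul, Matrix.mul_assoc]
      _ = V * (Matrix.diagonal lam * Matrix.diagonal lam) * star V := by
          rw [Matrix.diagonal_mul_diagonal, Matrix.diagonal_mul_diagonal]
          have : (fun i => |lam i| * |lam i|) = fun i => lam i * lam i := by
            funext i; exact abs_mul_abs_self (lam i)
          rw [this]
      _ = V * Matrix.diagonal lam * star V * (V * Matrix.diagonal lam * star V) := by
          simp only [Matrix.mul_assoc]
          rw [← Matrix.mul_assoc (star V) V, hVV', Matrix.one_mul]
  have hmat : matAbs C = S := by
    have hP := Matrix.posSemidef_conjTranspose_mul_self C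
    have h1 : matAbs C = cfc Real.sqrt (Cᴴ * C) := by
      rw [hP.1.cfc_eq]; rfl
    rw [h1]
    open MatrixOrder in
    have h2 : CFC.sqrt (Cᴴ * C) = S :=
      CFC.sqrt_unique (by rw [← pow_two]; exact hSsq) hSpsd.nonneg
    open MatrixOrder in
    rw [← h2, CFC.sqrt_eq_cfc, cfc_nnreal_eq_real _ _ hP.nonneg]
    congr 1
    funext x
    rw [Real.sqrt]
  set At : Matrix (Fin n) (Fin n) ℝ := star V * A * V with hAt
  set Bt : Matrix (Fin n) (Fin n) ℝ := star V * B * V with hBt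
  have hAtpsd : At.PosSemidef := by
    rw [hAt, Matrix.star_eq_conjTranspose]
    exact hA.conjTranspose_mul_mul_same V
  have hBtpsd : Bt.PosSemidef := by
    rw [hBt, Matrix.star_eq_conjTranspose]
    exact hB.conjTranspose_mul_mul_same V
  -- trace of A * matAbs C
  have htrA : (A * matAbs C).trace = ∑ i, At i i * |lam i| := by
    rw [hmat, hS]
    have : A * (V * Matrix.diagonal (fun i => |lam i|) * star V)
        = (A * V * Matrix.diagonal (fun i => |lam i|)) * star V := by
      simp only [Matrix.mul_assoc]
    rw [this, Matrix.trace_mul_comm]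
    have : star V * (A * V * Matrix.diagonal (fun i => |lam i|))
        = At * Matrix.diagonal (fun i => |lam i|) := by
      rw [hAt]; simp only [Matrix.mul_assoc]
    rw [this, trace_mul_diag]
  have htrB : (B * matAbs C).trace = ∑ i, Bt i i * |lam i| := by
    rw [hmat, hS]
    have : B * (V * Matrix.diagonal (fun i => |lam i|) * star V)
        = (B * V * Matrix.diagonal (fun i => |lam i|)) * star V := by
      simp only [Matrix.mul_assoc]
    rw [this, Matrix.trace_mul_comm]
    have : star V * (B * V * Matrix.diagonal (fun i => |lam i|))
        = Bt * Matrix.diagonal (fun i => |lam i|) := by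
      rw [hBt]; simp only [Matrix.mul_assoc]
    rw [this, trace_mul_diag]
  -- trace of A C B C
  have htrL : (A * C * B * C).trace = ∑ i, ∑ j, At i j * lam j * Bt j i * lam i := by
    rw [hspec]
    have h1 : A * (V * Matrix.diagonal lam * star V) * B * (V * Matrix.diagonal lam * star V)
        = (A * V * Matrix.diagonal lam * star V * B * V * Matrix.diagonal lam) * star V := by
      simp only [Matrix.mul_assoc]
    rw [h1, Matrix.trace_mul_comm]
    have h2 : star V * (A * V * Matrix.diagonal lam * star V * B * V * Matrix.diagonal lam)
        = At * Matrix.diagonal lam * Bt * Matrix.diagonal lam := by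
      rw [hAt, hBt]; simp only [Matrix.mul_assoc]
    rw [h2, trace_mul_diag_mul_diag]
  rw [htrA, htrB, htrL]
  -- now the numerical inequality
  set a : Fin n → ℝ := fun i => At i i with ha
  set b : Fin n → ℝ := fun i => Bt i i with hb
  have hann : ∀ i, 0 ≤ a i := fun i => psd_diag_nonneg hAtpsd i
  have hbnn : ∀ i, 0 ≤ b i := fun i => psd_diag_nonneg hBtpsd i
  set r : Fin n → ℝ := fun i => |lam i| * Real.sqrt (a i * b i) with hr
  have step1 : ∑ i, ∑ j, At i j * lam j * Bt j i * lam i ≤ ∑ i, ∑ j, r i * r j := by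
    apply Finset.sum_le_sum; intro i _
    apply Finset.sum_le_sum; intro j _
    have hA2 : (At i j) ^ 2 ≤ a i * a j := psd_sq_entry_le hAtpsd i j
    have hB2 : (Bt j i) ^ 2 ≤ b j * b i := psd_sq_entry_le hBtpsd j i
    have habs : |At i j * Bt j i| ≤ Real.sqrt (a i * b i) * Real.sqrt (a j * b j) := by
      rw [← Real.sqrt_mul (mul_nonneg (hann i) (hbnn i)), ← Real.sqrt_sq_eq_abs]
      apply Real.sqrt_le_sqrt
      calc (At i j * Bt j i) ^ 2 = (At i j) ^ 2 * (Bt j i) ^ 2 := by ring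
        _ ≤ (a i * a j) * (b j * b i) := by
            apply mul_le_mul hA2 hB2 (sq_nonneg _)
            exact mul_nonneg (hann i) (hann j)
        _ = a i * b i * (a j * b j) := by ring
    have hmul := mul_le_mul_of_nonneg_right habs
      (mul_nonneg (abs_nonneg (lam i)) (abs_nonneg (lam j)))
    calc At i j * lam j * Bt j i * lam i ≤ |At i j * lam j * Bt j i * lam i| := le_abs_self _
      _ = |At i j * Bt j i| * (|lam i| * |lam j|) := by
          rw [abs_mul, abs_mul, abs_mul, abs_mul]; ring
      _ ≤ Real.sqrt (a i * b i) * Real.sqrt (a j * b j) * (|lam i| * |lam j|) := hmul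
      _ = r i * r j := by rw [hr]; ring
  have step2 : ∑ i, ∑ j, r i * r j = (∑ i, r i) ^ 2 := by
    rw [sq, Finset.sum_mul_sum]
  have step3 : (∑ i, r i) ^ 2 ≤ (∑ i, |lam i| * a i) * ∑ i, |lam i| * b i := by
    apply Finset.sum_sq_le_sum_mul_sum_of_sq_eq_mul
    · intro i _; exact mul_nonneg (abs_nonneg _) (hann i)
    · intro i _; exact mul_nonneg (abs_nonneg _) (hbnn i)
    · intro i _
      rw [hr, mul_pow, Real.sq_sqrt (mul_nonneg (hann i) (hbnn i))]
      ring
  calc ∑ i, ∑ j, At i j * lam j * Bt j i * lam i ≤ (∑ i, r i) ^ 2 := step2 ▸ step1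
    _ ≤ (∑ i, |lam i| * a i) * ∑ i, |lam i| * b i := step3
    _ = (∑ i, At i i * |lam i|) * ∑ i, Bt i i * |lam i| := by
        simp_rw [mul_comm]
        rfl
end

section
/- Let A, B be symmetric real n×n matrices with A positive definite, and let η > 0 satisfy ‖η·A⁻¹·B‖ ≤ 1/2, where ‖·‖ is the spectral norm. Then A − η·B is invertible and there exists c ∈ [-2, 2] such that tr((A − ηB)⁻¹) = tr(A⁻¹) + η·tr(A⁻¹ B A⁻¹) + c·η²·tr(A⁻¹ B A⁻¹ B A⁻¹). -/
open Matrix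
open scoped Matrix.Norms.L2Operator
open scoped MatrixOrder

lemma RR_tr_bound (n : ℕ) (Q R : Matrix (Fin n) (Fin n) ℝ) :
    |(Q * R * Qᵀ).trace| ≤ ‖R‖ * (Qᵀ * Q).trace := by
  classical
  set e := (EuclideanSpace.equiv (Fin n) ℝ).symm with he'
  have he : ∀ (v : Fin n → ℝ) (x : Fin n), e v x = v x := fun _ _ => rfl
  have hterm : ∀ i, (Q * R * Qᵀ) i i = (inner ℝ (e (Q i)) (e (R *ᵥ Q i)) : ℝ) := by
    intro i
    simp only [Matrix.mul_apply, Matrix.transpose_apply, PiLp.inner_apply, RCLike.inner_apply,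
      conj_trivial, he, Matrix.mulVec, dotProduct, Finset.mul_sum]
    simp only [Finset.sum_mul]
    rw [Finset.sum_comm]
    exact Finset.sum_congr rfl fun j _ => Finset.sum_congr rfl fun k _ => by ring
  have hsq : ∀ i, (Q * Qᵀ) i i = ‖e (Q i)‖ ^ 2 := by
    intro i
    rw [← real_inner_self_eq_norm_sq]
    simp only [Matrix.mul_apply, Matrix.transpose_apply, PiLp.inner_apply, RCLike.inner_apply,
      conj_trivial, he]
  have hbound : ∀ i, |(Q * R * Qᵀ) i i| ≤ ‖R‖ * ‖e (Q i)‖ ^ 2 := by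
    intro i
    rw [hterm i]
    calc |(inner ℝ (e (Q i)) (e (R *ᵥ Q i)) : ℝ)| ≤ ‖e (Q i)‖ * ‖e (R *ᵥ Q i)‖ :=
          abs_real_inner_le_norm _ _
      _ ≤ ‖e (Q i)‖ * (‖R‖ * ‖e (Q i)‖) :=
          mul_le_mul_of_nonneg_left (R.l2_opNorm_mulVec (e (Q i))) (norm_nonneg _)
      _ = ‖R‖ * ‖e (Q i)‖ ^ 2 := by ring
  have h1 : (Qᵀ * Q).trace = (Q * Qᵀ).trace := Matrix.trace_mul_comm _ _
  rw [h1, Matrix.trace]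
  calc |∑ i, (Q * R * Qᵀ).diag i| ≤ ∑ i, |(Q * R * Qᵀ) i i| := Finset.abs_sum_le_sum_abs _ _
    _ ≤ ∑ i, ‖R‖ * ‖e (Q i)‖ ^ 2 := Finset.sum_le_sum fun i _ => hbound i
    _ = ‖R‖ * ∑ i, (Q * Qᵀ).diag i := by
        rw [Finset.mul_sum]; exact Finset.sum_congr rfl fun i _ => by rw [Matrix.diag, hsq i]

lemma RR_tr_QtQ_nonneg (n : ℕ) (Q : Matrix (Fin n) (Fin n) ℝ) : 0 ≤ (Qᵀ * Q).trace := by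
  rw [Matrix.trace]
  refine Finset.sum_nonneg fun i _ => ?_
  rw [Matrix.diag, Matrix.mul_apply]
  exact Finset.sum_nonneg fun j _ => by
    simpa [Matrix.transpose_apply] using mul_self_nonneg (Q j i)

lemma RR_tr_QtQ_eq_zero (n : ℕ) (Q : Matrix (Fin n) (Fin n) ℝ) (h : (Qᵀ * Q).trace = 0) :
    Q = 0 := by
  ext j i
  have h1 : ∀ i ∈ Finset.univ, (0:ℝ) ≤ (Qᵀ * Q).diag i := fun i _ => by
    rw [Matrix.diag, Matrix.mul_apply]
    exact Finset.sum_nonneg fun j _ => by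
      simpa [Matrix.transpose_apply] using mul_self_nonneg (Q j i)
  have h2 := (Finset.sum_eq_zero_iff_of_nonneg h1).mp h i (Finset.mem_univ i)
  rw [Matrix.diag, Matrix.mul_apply] at h2
  have h3 : ∀ j ∈ Finset.univ, (0:ℝ) ≤ Qᵀ i j * Q j i := fun j _ => by
    simpa [Matrix.transpose_apply] using mul_self_nonneg (Q j i)
  have h4 := (Finset.sum_eq_zero_iff_of_nonneg h3).mp h2 j (Finset.mem_univ j)
  rw [Matrix.transpose_apply] at h4
  simpa using mul_self_eq_zero.mp h4

lemma RR_norm_pow_two_pow (n : ℕ) (X : Matrix (Fin n) (Fin n) ℝ) (hX : Xᵀ = X) (k : ℕ) :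
    ‖X ^ (2^k)‖ = ‖X‖ ^ (2^k) := by
  induction k with
  | zero => simp
  | succ k ih =>
    have hherm : (X ^ 2^k)ᴴ = X ^ 2^k := by
      rw [Matrix.conjTranspose_eq_transpose_of_trivial, Matrix.transpose_pow, hX]
    have hsplit : X ^ 2^(k+1) = (X ^ 2^k)ᴴ * (X ^ 2^k) := by
      rw [hherm, ← pow_add, pow_succ, mul_two]
    rw [hsplit, Matrix.l2_opNorm_conjTranspose_mul_self, ih, ← pow_add, pow_succ, mul_two]

/-- Lemma 2.5 (Lemma 11 of Reis–Rothvoss): second-order approximation of the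
trace inverse under perturbation. -/
theorem trace_inverse_perturbation (n : ℕ) (A B : Matrix (Fin n) (Fin n) ℝ) (η : ℝ)
    (hA : A.PosDef) (hB : B.IsSymm) (hη : 0 < η)
    (hnorm : ‖η • (A⁻¹ * B)‖ ≤ 1 / 2) :
    IsUnit (A - η • B).det ∧
    ∃ c ∈ Set.Icc (-2 : ℝ) 2,
      ((A - η • B)⁻¹).trace =
        (A⁻¹).trace + η * (A⁻¹ * B * A⁻¹).trace +
          c * η ^ 2 * (A⁻¹ * B * A⁻¹ * B * A⁻¹).trace := by
  classical
  have hAdet : IsUnit A.det := isUnit_iff_ne_zero.mpr hA.det_pos.ne'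
  have hAinv : (A⁻¹).PosDef := hA.inv
  set S := CFC.sqrt (A⁻¹) with hSdef
  have hSS : S * S = A⁻¹ := CFC.sqrt_mul_sqrt_self (A⁻¹) hAinv.posSemidef.nonneg
  have hST : Sᵀ = S := by
    have h := (Matrix.nonneg_iff_posSemidef.mp (CFC.sqrt_nonneg (A⁻¹))).isHermitian
    rwa [Matrix.IsHermitian, Matrix.conjTranspose_eq_transpose_of_trivial] at h
  have hSdet : IsUnit S.det := by
    refine isUnit_iff_ne_zero.mpr fun h => ?_
    have h1 : S.det * S.det = (A⁻¹).det := by rw [← Matrix.det_mul, hSS]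
    rw [h, mul_zero] at h1
    exact hAinv.det_pos.ne' h1.symm
  have hSiS : S⁻¹ * S = 1 := Matrix.nonsing_inv_mul S hSdet
  have hSSi : S * S⁻¹ = 1 := Matrix.mul_nonsing_inv S hSdet
  have hSiSi : S⁻¹ * S⁻¹ = A := by
    rw [← Matrix.mul_inv_rev, hSS, Matrix.nonsing_inv_nonsing_inv A hAdet]
  set M := η • (A⁻¹ * B) with hMdef
  set X := η • (S * B * S) with hXdef
  have hXT : Xᵀ = X := by
    rw [hXdef, Matrix.transpose_smul, Matrix.transpose_mul, Matrix.transpose_mul, hST, hB.eq]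
    rw [mul_assoc]
  have hMS : M * S = S * X := by
    rw [hMdef, hXdef, ← hSS]
    simp only [Matrix.smul_mul, Matrix.mul_smul, mul_assoc]
  have hMkS : ∀ k : ℕ, M ^ k * S = S * X ^ k := by
    intro k; induction k with
    | zero => simp
    | succ k ih => rw [pow_succ, pow_succ, mul_assoc, hMS, ← mul_assoc, ih, mul_assoc]
  -- the norm bound transfers to the symmetrized matrix X
  have hXnorm : ‖X‖ ≤ 1/2 := by
    by_contra hc
    push_neg at hc
    have hCb : ∀ k : ℕ, ‖X‖ ^ 2^k ≤ (‖S⁻¹‖ * ‖S‖) * (1/2) ^ 2^k := by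
      intro k
      have h1 : X ^ 2^k = S⁻¹ * (M ^ 2^k * S) := by
        rw [hMkS, ← mul_assoc, hSiS, one_mul]
      have h2 : ‖M ^ 2^k‖ ≤ (1/2) ^ 2^k := by
        calc ‖M ^ 2^k‖ ≤ ‖M‖ ^ 2^k := norm_pow_le' M (Nat.two_pow_pos k)
          _ ≤ (1/2) ^ 2^k := pow_le_pow_left₀ (norm_nonneg _) hnorm _
      calc ‖X‖ ^ 2^k = ‖X ^ 2^k‖ := (RR_norm_pow_two_pow n X hXT k).symm
        _ ≤ ‖S⁻¹‖ * (‖M ^ 2^k‖ * ‖S‖) := by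
            rw [h1]
            exact le_trans (norm_mul_le _ _)
              (mul_le_mul_of_nonneg_left (norm_mul_le _ _) (norm_nonneg _))
        _ ≤ (‖S⁻¹‖ * ‖S‖) * (1/2) ^ 2^k := by
            rw [show ‖S⁻¹‖ * (‖M ^ 2^k‖ * ‖S‖) = (‖S⁻¹‖ * ‖S‖) * ‖M ^ 2^k‖ by ring]
            exact mul_le_mul_of_nonneg_left h2 (by positivity)
    have hone : (1:ℝ) < 2 * ‖X‖ := by linarith
    obtain ⟨m, hm⟩ := pow_unbounded_of_one_lt (‖S⁻¹‖ * ‖S‖) hone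
    have h2 : (2 * ‖X‖) ^ 2^m ≤ ‖S⁻¹‖ * ‖S‖ := by
      calc (2*‖X‖) ^ 2^m = ‖X‖ ^ 2^m * 2 ^ 2^m := by rw [mul_pow]; ring
        _ ≤ ((‖S⁻¹‖ * ‖S‖) * (1/2) ^ 2^m) * 2 ^ 2^m :=
            mul_le_mul_of_nonneg_right (hCb m) (by positivity)
        _ = ‖S⁻¹‖ * ‖S‖ := by rw [mul_assoc, ← mul_pow]; norm_num
    have h4 : (2*‖X‖) ^ m ≤ (2*‖X‖) ^ 2^m :=
      pow_le_pow_right₀ hone.le (Nat.le_of_lt (Nat.lt_two_pow_self (n := m)))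
    linarith
  -- invertibility and the resolvent R
  have hXlt : ‖X‖ < 1 := lt_of_le_of_lt hXnorm (by norm_num)
  haveI : CompleteSpace (Matrix (Fin n) (Fin n) ℝ) := FiniteDimensional.complete ℝ _
  have hu : IsUnit (1 - X) := isUnit_one_sub_of_norm_lt_one hXlt
  have hudet : IsUnit (1 - X).det := (Matrix.isUnit_iff_isUnit_det _).mp hu
  set R := (1 - X)⁻¹ with hRdef
  have huR : (1 - X) * R = 1 := Matrix.mul_nonsing_inv _ hudet
  have hRu : R * (1 - X) = 1 := Matrix.nonsing_inv_mul _ hudet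
  have hR1 : R = 1 + X * R := by
    have h : R - X * R = 1 := by rw [← huR]; noncomm_ring
    linear_combination (norm := noncomm_ring) h
  have hXR : X * R = R * X := by
    calc X * R = R * (1 - X) * X * R := by rw [hRu, one_mul]
      _ = R * X * ((1 - X) * R) := by noncomm_ring
      _ = R * X := by rw [huR, mul_one]
  have hRexp : R = 1 + X + X * X * R := by
    calc R = 1 + X * R := hR1
      _ = 1 + X * (1 + X * R) := by conv_lhs => rw [hR1]
      _ = 1 + X + X * X * R := by noncomm_ring
  have hRnorm : ‖R‖ ≤ 2 := by
    have hone : ‖(1 : Matrix (Fin n) (Fin n) ℝ)‖ ≤ 1 := by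
      rw [Matrix.cstar_norm_def, _root_.map_one, ContinuousLinearMap.one_def]
      exact ContinuousLinearMap.norm_id_le
    have h1 : ‖R‖ ≤ 1 + 1/2 * ‖R‖ := by
      calc ‖R‖ = ‖1 + X * R‖ := by rw [← hR1]
        _ ≤ ‖(1 : Matrix (Fin n) (Fin n) ℝ)‖ + ‖X‖ * ‖R‖ :=
            le_trans (norm_add_le _ _) (by gcongr; exact norm_mul_le _ _)
        _ ≤ 1 + 1/2 * ‖R‖ := by
            have := norm_nonneg R
            gcongr
    linarith
  -- factorization of A - ηB and its inverse
  have hfact : A - η • B = S⁻¹ * (1 - X) * S⁻¹ := by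
    have hX' : S⁻¹ * X * S⁻¹ = η • B := by
      rw [hXdef]
      simp only [Matrix.smul_mul, Matrix.mul_smul]
      rw [← mul_assoc, ← mul_assoc, hSiS, one_mul, mul_assoc, hSSi, mul_one]
    rw [mul_sub, sub_mul, mul_one, hSiSi, hX']
  have hright : (A - η • B) * (S * R * S) = 1 := by
    rw [hfact]
    calc S⁻¹ * (1 - X) * S⁻¹ * (S * R * S)
        = S⁻¹ * (1 - X) * (S⁻¹ * S) * R * S := by noncomm_ring
      _ = S⁻¹ * ((1 - X) * R) * S := by rw [hSiS]; noncomm_ring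
      _ = S⁻¹ * S := by rw [huR, mul_one]
      _ = 1 := hSiS
  have hisunit : IsUnit (A - η • B).det := Matrix.isUnit_det_of_right_inverse hright
  have hinv : (A - η • B)⁻¹ = S * R * S := Matrix.inv_eq_right_inv hright
  refine ⟨hisunit, ?_⟩
  -- trace identities
  have hSAS : S * (A⁻¹ * S) = A⁻¹ * A⁻¹ := by rw [← hSS]; noncomm_ring
  have htr0 : (S * R * S).trace = (A⁻¹ * R).trace := by
    rw [Matrix.trace_mul_comm (S * R) S, ← mul_assoc, hSS]
  have htrexp : (A⁻¹ * R).trace =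
      (A⁻¹).trace + (A⁻¹ * X).trace + (A⁻¹ * (X * X * R)).trace := by
    conv_lhs => rw [hRexp]
    rw [mul_add, mul_add, Matrix.trace_add, Matrix.trace_add, mul_one]
  have htr1 : (A⁻¹ * X).trace = η * (A⁻¹ * B * A⁻¹).trace := by
    calc (A⁻¹ * X).trace = η * ((A⁻¹ * (S * B) * S).trace) := by
          rw [hXdef, Matrix.mul_smul, Matrix.trace_smul, smul_eq_mul,
            show A⁻¹ * (S * B * S) = A⁻¹ * (S * B) * S from by noncomm_ring]
      _ = η * ((S * (A⁻¹ * (S * B))).trace) := by rw [Matrix.trace_mul_comm]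
      _ = η * (((A⁻¹ * A⁻¹) * B).trace) := by
          rw [show S * (A⁻¹ * (S * B)) = (S * (A⁻¹ * S)) * B from by noncomm_ring, hSAS]
      _ = η * ((A⁻¹ * B * A⁻¹).trace) := by
          rw [Matrix.trace_mul_comm (A⁻¹ * B) A⁻¹, ← mul_assoc]
  set Q := S * X with hQdef
  have hQT : Qᵀ = X * S := by rw [hQdef, Matrix.transpose_mul, hXT, hST]
  have htr2 : (A⁻¹ * (X * X * R)).trace = (Q * R * Qᵀ).trace := by
    rw [hQT, hQdef, ← hSS, show X * X * R = X * (R * X) from by rw [mul_assoc, hXR],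
      show S * S * (X * (R * X)) = S * (S * (X * (R * X))) from by noncomm_ring,
      Matrix.trace_mul_comm,
      show (S * (X * (R * X))) * S = (S * X) * R * (X * S) from by noncomm_ring]
  have htr3 : (Qᵀ * Q).trace = η^2 * (A⁻¹ * B * A⁻¹ * B * A⁻¹).trace := by
    have e1 : Qᵀ * Q = (η * η) • (S * ((B * (S * S)) * ((S * S) * B) * S)) := by
      rw [hQT, hQdef, hXdef]
      simp only [Matrix.smul_mul, Matrix.mul_smul, smul_smul, mul_assoc]
    calc (Qᵀ * Q).trace
        = (η * η) * ((S * ((B * (S * S)) * ((S * S) * B) * S)).trace) := by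
          rw [e1, Matrix.trace_smul, smul_eq_mul]
      _ = (η * η) * ((((B * (S * S)) * ((S * S) * B) * S) * S).trace) := by
          rw [Matrix.trace_mul_comm]
      _ = (η * η) * (((B * (S * S)) * (((S * S) * B) * (S * S))).trace) := by
          rw [show ((B * (S * S)) * ((S * S) * B) * S) * S
            = (B * (S * S)) * (((S * S) * B) * (S * S)) from by noncomm_ring]
      _ = (η * η) * (((((S * S) * B) * (S * S)) * (B * (S * S))).trace) := by
          rw [Matrix.trace_mul_comm]
      _ = η^2 * (A⁻¹ * B * A⁻¹ * B * A⁻¹).trace := by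
          rw [hSS, ← pow_two,
            show ((A⁻¹ * B) * A⁻¹) * (B * A⁻¹) = A⁻¹ * B * A⁻¹ * B * A⁻¹ from by noncomm_ring]
  set E := (Q * R * Qᵀ).trace with hEdef
  set T := (Qᵀ * Q).trace with hTdef
  have hT0 : 0 ≤ T := RR_tr_QtQ_nonneg n Q
  have hEbound : |E| ≤ 2 * T := by
    calc |E| ≤ ‖R‖ * T := RR_tr_bound n Q R
      _ ≤ 2 * T := mul_le_mul_of_nonneg_right hRnorm hT0
  have hmain : ((A - η • B)⁻¹).trace =
      (A⁻¹).trace + η * (A⁻¹ * B * A⁻¹).trace + E := by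
    rw [hinv, htr0, htrexp, htr1, htr2]
  by_cases hT : T = 0
  · refine ⟨0, by constructor <;> norm_num, ?_⟩
    have hQ0 : Q = 0 := RR_tr_QtQ_eq_zero n Q hT
    have hE0 : E = 0 := by rw [hEdef, hQ0]; simp
    rw [hmain, hE0]; ring
  · have hTpos : 0 < T := lt_of_le_of_ne hT0 (Ne.symm hT)
    refine ⟨E / T, ?_, ?_⟩
    · rw [Set.mem_Icc]
      constructor
      · rw [le_div_iff₀ hTpos]
        have := (abs_le.mp hEbound).1
        linarith
      · rw [div_le_iff₀ hTpos]
        have := (abs_le.mp hEbound).2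
        linarith
    · rw [hmain, mul_assoc (E / T), ← htr3, div_mul_cancel₀ _ hT]
end

section
/- Let X be a symmetric real n×n matrix with n ≥ 1 and η > 0. Then there exists a unique u ∈ ℝ such that u·I_n − η·X is positive definite and tr((u·I_n − η·X)^{-2}) = 1. Moreover, for this u, the matrix M := (u·I_n − η·X)^{-2} is the unique maximizer over all density matrices M' of the function M' ↦ tr(X·M') + (2/η)·tr(√M'), and the maximum value Φ_η(X) := sup_{M' density matrix} [tr(X·M') + (2/η)·tr(√M')] equals (1/η)·tr((u·I_n − η·X)⁻¹) + u/η. -/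
open Matrix

open Classical in
/-- The positive semidefinite square root of a matrix (zero if the matrix is not
positive semidefinite). -/
noncomputable def psdSqrt {n : ℕ} (M : Matrix (Fin n) (Fin n) ℝ) :
    Matrix (Fin n) (Fin n) ℝ :=
  if h : M.PosSemidef then (h.1.eigenvectorUnitary : Matrix (Fin n) (Fin n) ℝ) *
    diagonal (Real.sqrt ∘ h.1.eigenvalues) *
    (star h.1.eigenvectorUnitary : Matrix (Fin n) (Fin n) ℝ) else 0

/-- The `ℓ_{1/2}`-regularized maximum-eigenvalue potential
`Φ_η(X) = sup { tr(X M) + (2/η) tr(√M) : M a density matrix }`. -/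
noncomputable def potential {n : ℕ} (η : ℝ) (X : Matrix (Fin n) (Fin n) ℝ) : ℝ :=
  sSup {r : ℝ | ∃ M : Matrix (Fin n) (Fin n) ℝ, M.PosSemidef ∧ M.trace = 1 ∧
    r = (X * M).trace + (2 / η) * (psdSqrt M).trace}

lemma psdSqrt_eq_cfc {n : ℕ} {M : Matrix (Fin n) (Fin n) ℝ} (h : M.PosSemidef) :
    psdSqrt M = cfc Real.sqrt M := by
  rw [psdSqrt, dif_pos h, h.1.cfc_eq, IsHermitian.cfc, Unitary.conjStarAlgAut_apply]
  simp [Function.comp_def]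

lemma psdSqrt_posSemidef {n : ℕ} {M : Matrix (Fin n) (Fin n) ℝ} (h : M.PosSemidef) :
    (psdSqrt M).PosSemidef := by
  rw [psdSqrt, dif_pos h]
  simpa [Unitary.coe_star, star_eq_conjTranspose, Function.comp_def] using
    (posSemidef_diagonal_iff.mpr fun i => Real.sqrt_nonneg (h.1.eigenvalues i)).mul_mul_conjTranspose_same
      (h.1.eigenvectorUnitary : Matrix (Fin n) (Fin n) ℝ)

lemma psd_spec_nonneg {n : ℕ} {M : Matrix (Fin n) (Fin n) ℝ} (h : M.PosSemidef) :
    ∀ x ∈ spectrum ℝ M, 0 ≤ x := by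
  intro x hx
  rw [h.1.spectrum_real_eq_range_eigenvalues] at hx
  obtain ⟨i, rfl⟩ := hx
  exact h.eigenvalues_nonneg i

lemma psdSqrt_mul_self {n : ℕ} {M : Matrix (Fin n) (Fin n) ℝ} (h : M.PosSemidef) :
    psdSqrt M * psdSqrt M = M := by
  rw [psdSqrt_eq_cfc h, ← cfc_mul Real.sqrt Real.sqrt M,
    cfc_congr (g := fun x => x) (fun x hx => Real.mul_self_sqrt (psd_spec_nonneg h x hx)),
    cfc_id' ℝ M h.1.isSelfAdjoint]

lemma psdSqrt_sq {n : ℕ} {B : Matrix (Fin n) (Fin n) ℝ} (h : B.PosSemidef) :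
    psdSqrt (B ^ 2) = B := by
  rw [psdSqrt_eq_cfc (h.pow 2), ← cfc_comp_pow Real.sqrt 2 B (ha := h.1.isSelfAdjoint),
    cfc_congr (g := fun x => x) (fun x hx => Real.sqrt_sq (psd_spec_nonneg h x hx)),
    cfc_id' ℝ B h.1.isSelfAdjoint]

section Aux

variable {n : ℕ}

lemma aux_trace_CTmul (B : Matrix (Fin n) (Fin n) ℝ) :
    (Bᴴ * B).trace = ∑ j, ∑ i, (B i j)^2 := by
  simp [Matrix.trace, Matrix.diag, Matrix.mul_apply, sq, Matrix.conjTranspose_apply]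

lemma aux_quad {A D : Matrix (Fin n) (Fin n) ℝ} (hA : A.PosDef) (hD : D.IsHermitian) :
    0 ≤ (A * (D * D)).trace ∧ ((A * (D * D)).trace = 0 → D = 0) := by
  obtain ⟨B, hB⟩ : ∃ B : Matrix (Fin n) (Fin n) ℝ, A = Bᴴ * B :=
    ⟨psdSqrt A, by rw [(psdSqrt_posSemidef hA.posSemidef).1.eq, psdSqrt_mul_self hA.posSemidef]⟩
  have h1 : (A * (D * D)).trace = ((B * D)ᴴ * (B * D)).trace := by
    rw [Matrix.conjTranspose_mul, hD.eq, hB, ← Matrix.mul_assoc,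
      Matrix.trace_mul_comm (Bᴴ * B * D) D]
    simp [Matrix.mul_assoc]
  constructor
  · rw [h1, aux_trace_CTmul]
    positivity
  · intro hT
    have hBD : B * D = 0 := by
      have h2 : ∑ j, ∑ i, ((B * D) i j)^2 = 0 := by rw [← aux_trace_CTmul, ← h1, hT]
      ext i j
      have := (Finset.sum_eq_zero_iff_of_nonneg (fun j _ => Finset.sum_nonneg
        (fun i _ => sq_nonneg _))).mp h2 j (Finset.mem_univ j)
      have := (Finset.sum_eq_zero_iff_of_nonneg (fun i _ => sq_nonneg _)).mp this i
        (Finset.mem_univ i)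
      simpa [sq] using pow_eq_zero_iff (n := 2) (by norm_num) |>.mp (by simpa using this)
    have hAD : A * D = 0 := by rw [hB, Matrix.mul_assoc, hBD, Matrix.mul_zero]
    have hu : IsUnit A.det := isUnit_iff_ne_zero.mpr (ne_of_gt hA.det_pos)
    calc D = A⁻¹ * (A * D) := by
          rw [← Matrix.mul_assoc, Matrix.nonsing_inv_mul A hu, Matrix.one_mul]
      _ = 0 := by rw [hAD, Matrix.mul_zero]

variable {V : Matrix (Fin n) (Fin n) ℝ}

lemma aux_posDef_conj {A : Matrix (Fin n) (Fin n) ℝ} (hA : A.PosDef)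
    (hV : V * Vᴴ = 1) : (V * A * Vᴴ).PosDef := by
  refine posDef_iff_dotProduct_mulVec.mpr
    ⟨Matrix.isHermitian_mul_mul_conjTranspose V hA.isHermitian, fun x hx => ?_⟩
  have hy : Vᴴ *ᵥ x ≠ 0 := by
    intro h
    apply hx
    have h2 := congrArg (fun v => V *ᵥ v) h
    simpa [Matrix.mulVec_mulVec, show V * Vᵀ = 1 by simpa using hV] using h2
  simpa only [star_mulVec, Matrix.dotProduct_mulVec, Matrix.vecMul_vecMul,
    Matrix.conjTranspose_conjTranspose] using hA.dotProduct_mulVec_pos hy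

lemma aux_conj_trace (hV2 : Vᴴ * V = 1) (D : Matrix (Fin n) (Fin n) ℝ) :
    (V * D * Vᴴ).trace = D.trace := by
  rw [Matrix.trace_mul_cycle, hV2, Matrix.one_mul]

lemma aux_conj_mul (hV2 : Vᴴ * V = 1) (D₁ D₂ : Matrix (Fin n) (Fin n) ℝ) :
    (V * D₁ * Vᴴ) * (V * D₂ * Vᴴ) = V * (D₁ * D₂) * Vᴴ := by
  calc (V * D₁ * Vᴴ) * (V * D₂ * Vᴴ) = V * (D₁ * ((Vᴴ * V) * (D₂ * Vᴴ))) := by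
        simp only [Matrix.mul_assoc]
    _ = V * (D₁ * D₂) * Vᴴ := by rw [hV2, Matrix.one_mul]; simp only [Matrix.mul_assoc]

lemma aux_conj_inv (hV1 : V * Vᴴ = 1) (hV2 : Vᴴ * V = 1) {d : Fin n → ℝ}
    (hd : ∀ i, d i ≠ 0) :
    (V * Matrix.diagonal d * Vᴴ)⁻¹ = V * Matrix.diagonal (fun i => (d i)⁻¹) * Vᴴ := by
  apply Matrix.inv_eq_right_inv
  rw [aux_conj_mul hV2, Matrix.diagonal_mul_diagonal]
  have h1 : (fun i => d i * (d i)⁻¹) = fun _ => (1:ℝ) := funext fun i => mul_inv_cancel₀ (hd i)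
  rw [h1, Matrix.diagonal_one, Matrix.mul_one, hV1]

lemma aux_conj_posDef_iff (hV1 : V * Vᴴ = 1) (hV2 : Vᴴ * V = 1) (d : Fin n → ℝ) :
    (V * Matrix.diagonal d * Vᴴ).PosDef ↔ ∀ i, 0 < d i := by
  constructor
  · intro h
    rw [← Matrix.posDef_diagonal_iff (d := d)]
    have key : Matrix.diagonal d = Vᴴ * (V * Matrix.diagonal d * Vᴴ) * (Vᴴ)ᴴ := by
      rw [Matrix.conjTranspose_conjTranspose]
      calc Matrix.diagonal d = 1 * Matrix.diagonal d * 1 := by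
            rw [Matrix.one_mul, Matrix.mul_one]
        _ = (Vᴴ * V) * Matrix.diagonal d * (Vᴴ * V) := by rw [hV2]
        _ = Vᴴ * (V * Matrix.diagonal d * Vᴴ) * V := by simp only [Matrix.mul_assoc]
    rw [key]
    exact aux_posDef_conj h (by rw [Matrix.conjTranspose_conjTranspose, hV2])
  · intro h
    exact aux_posDef_conj (Matrix.PosDef.diagonal h) hV1

lemma aux_decomp {X : Matrix (Fin n) (Fin n) ℝ} {lam : Fin n → ℝ}
    (hspec : X = V * Matrix.diagonal lam * Vᴴ) (hV1 : V * Vᴴ = 1)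
    (u η : ℝ) :
    u • (1 : Matrix (Fin n) (Fin n) ℝ) - η • X =
      V * Matrix.diagonal (fun i => u - η * lam i) * Vᴴ := by
  have h1 : Matrix.diagonal (fun i => u - η * lam i) =
      u • (1 : Matrix (Fin n) (Fin n) ℝ) - η • Matrix.diagonal lam := by
    ext i j
    rcases eq_or_ne i j with rfl | h
    · simp [Matrix.diagonal_apply_eq]
    · simp [Matrix.diagonal_apply_ne _ h, Matrix.one_apply_ne h]
  rw [h1, Matrix.mul_sub, Matrix.sub_mul, hspec]
  congr 1
  · rw [mul_smul_comm, Matrix.mul_one, smul_mul_assoc, hV1]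
  · rw [mul_smul_comm, smul_mul_assoc]

lemma aux_scalar (hn : 1 ≤ n) (lam : Fin n → ℝ) (η : ℝ) (hη : 0 < η) :
    ∃! u : ℝ, (∀ i, 0 < u - η * lam i) ∧ ∑ i, ((u - η * lam i)⁻¹)^2 = 1 := by
  haveI : Nonempty (Fin n) := Fin.pos_iff_nonempty.mp hn
  set m := Finset.univ.sup' Finset.univ_nonempty lam with hm_def
  have hm : ∀ i, lam i ≤ m := fun i => Finset.le_sup' lam (Finset.mem_univ i)
  obtain ⟨i₀, -, hi₀⟩ := Finset.exists_mem_eq_sup' (Finset.univ_nonempty (α := Fin n)) lam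
  have hlam : lam i₀ = m := hi₀.symm
  have hn1 : (1:ℝ) ≤ n := by exact_mod_cast hn
  have hlohi : η * m + 1 ≤ η * m + n := by linarith
  have hanti : ∀ u v : ℝ, (∀ i, 0 < u - η * lam i) → u < v →
      ∑ i, ((v - η * lam i)⁻¹)^2 < ∑ i, ((u - η * lam i)⁻¹)^2 := by
    intro u v hu huv
    apply Finset.sum_lt_sum_of_nonempty Finset.univ_nonempty
    intro i _
    have h1 : 0 < u - η * lam i := hu i
    have h2 : u - η * lam i < v - η * lam i := by linarith
    have h3 : (v - η * lam i)⁻¹ < (u - η * lam i)⁻¹ := inv_strictAnti₀ h1 h2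
    exact pow_lt_pow_left₀ h3 (inv_nonneg.mpr (by linarith)) (by norm_num)
  have hpos : ∀ u, η * m + 1 ≤ u → ∀ i, 0 < u - η * lam i := by
    intro u hu i
    have := hm i
    nlinarith
  have hcont : ContinuousOn (fun u => ∑ i, ((u - η * lam i)⁻¹)^2)
      (Set.Icc (η * m + 1) (η * m + n)) := by
    apply continuousOn_finset_sum
    intro i _
    apply ContinuousOn.pow
    apply ContinuousOn.inv₀
    · exact continuousOn_id.sub continuousOn_const
    · intro u hu
      exact ne_of_gt (hpos u hu.1 i)
  have hkey : η * m + 1 - η * lam i₀ = 1 := by rw [hlam]; ring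
  have hglo : 1 ≤ ∑ i, ((η * m + 1 - η * lam i)⁻¹)^2 := by
    calc (1:ℝ) = ((η * m + 1 - η * lam i₀)⁻¹)^2 := by rw [hkey]; norm_num
      _ ≤ ∑ i, ((η * m + 1 - η * lam i)⁻¹)^2 :=
          Finset.single_le_sum (f := fun i => ((η * m + 1 - η * lam i)⁻¹)^2)
            (fun i _ => sq_nonneg _) (Finset.mem_univ i₀)
  have hghi : ∑ i, ((η * m + n - η * lam i)⁻¹)^2 ≤ 1 := by
    have hterm : ∀ i : Fin n, ((η * m + n - η * lam i)⁻¹)^2 ≤ ((n:ℝ)⁻¹)^2 := by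
      intro i
      have h1 : (n:ℝ) ≤ η * m + n - η * lam i := by
        have := hm i; nlinarith
      have h2 : (η * m + n - η * lam i)⁻¹ ≤ (n:ℝ)⁻¹ := inv_anti₀ (by linarith) h1
      exact pow_le_pow_left₀ (inv_nonneg.mpr (by linarith)) h2 2
    calc ∑ i, ((η * m + n - η * lam i)⁻¹)^2 ≤ ∑ _i : Fin n, ((n:ℝ)⁻¹)^2 :=
          Finset.sum_le_sum (fun i _ => hterm i)
      _ = n * ((n:ℝ)⁻¹)^2 := by rw [Finset.sum_const]; simp [mul_comm]
      _ = (n:ℝ)⁻¹ := by field_simp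
      _ ≤ 1 := by rw [inv_le_one_iff₀]; right; exact hn1
  obtain ⟨u, hu_mem, hu_eq⟩ := intermediate_value_Icc' hlohi hcont ⟨hghi, hglo⟩
  simp only [] at hu_eq
  have hu_eq : ∑ i, ((u - η * lam i)⁻¹)^2 = 1 := hu_eq
  refine ⟨u, ⟨hpos u hu_mem.1, hu_eq⟩, ?_⟩
  rintro v ⟨hv_pos, hv_eq⟩
  rcases lt_trichotomy v u with h | h | h
  · have := hanti v u hv_pos h
    rw [hu_eq, hv_eq] at this
    exact absurd this (lt_irrefl 1)
  · exact h
  · have := hanti u v (hpos u hu_mem.1) h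
    rw [hu_eq, hv_eq] at this
    exact absurd this (lt_irrefl 1)

end Aux

/-- Optimizer characterization and closed form of the regularized potential
(part of Lemma 3.1 and equation (eq:Phi)). -/
theorem potential_optimizer (n : ℕ) (hn : 1 ≤ n) (X : Matrix (Fin n) (Fin n) ℝ)
    (hX : X.IsSymm) (η : ℝ) (hη : 0 < η) :
    (∃! u : ℝ, (u • (1 : Matrix (Fin n) (Fin n) ℝ) - η • X).PosDef ∧
      (((u • (1 : Matrix (Fin n) (Fin n) ℝ) - η • X)⁻¹ ^ 2).trace = 1)) ∧
    ∀ u : ℝ, (u • (1 : Matrix (Fin n) (Fin n) ℝ) - η • X).PosDef →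
      ((u • (1 : Matrix (Fin n) (Fin n) ℝ) - η • X)⁻¹ ^ 2).trace = 1 →
      (∀ M' : Matrix (Fin n) (Fin n) ℝ, M'.PosSemidef → M'.trace = 1 →
        ((X * M').trace + (2 / η) * (psdSqrt M').trace ≤
          (X * ((u • (1 : Matrix (Fin n) (Fin n) ℝ) - η • X)⁻¹ ^ 2)).trace +
            (2 / η) * (psdSqrt ((u • (1 : Matrix (Fin n) (Fin n) ℝ) - η • X)⁻¹ ^ 2)).trace) ∧
        ((X * M').trace + (2 / η) * (psdSqrt M').trace =
          (X * ((u • (1 : Matrix (Fin n) (Fin n) ℝ) - η • X)⁻¹ ^ 2)).trace +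
            (2 / η) * (psdSqrt ((u • (1 : Matrix (Fin n) (Fin n) ℝ) - η • X)⁻¹ ^ 2)).trace →
          M' = (u • (1 : Matrix (Fin n) (Fin n) ℝ) - η • X)⁻¹ ^ 2)) ∧
      potential η X =
        (1 / η) * ((u • (1 : Matrix (Fin n) (Fin n) ℝ) - η • X)⁻¹).trace + u / η := by
  have hXh : X.IsHermitian := by rwa [Matrix.IsHermitian, Matrix.conjTranspose, Matrix.IsSymm] at *
  set V : Matrix (Fin n) (Fin n) ℝ := (hXh.eigenvectorUnitary : Matrix (Fin n) (Fin n) ℝ)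
    with hV_def
  set lam : Fin n → ℝ := hXh.eigenvalues with hlam_def
  have hV1 : V * Vᴴ = 1 := Unitary.coe_mul_star_self hXh.eigenvectorUnitary
  have hV2 : Vᴴ * V = 1 := Unitary.coe_star_mul_self hXh.eigenvectorUnitary
  have hspec : X = V * Matrix.diagonal lam * Vᴴ := by
    convert hXh.spectral_theorem using 2
    simp [Unitary.conjStarAlgAut_apply, V, lam, Function.comp_def, Unitary.coe_star,
      star_eq_conjTranspose]
  have hdecomp : ∀ u : ℝ, u • (1 : Matrix (Fin n) (Fin n) ℝ) - η • X =
      V * Matrix.diagonal (fun i => u - η * lam i) * Vᴴ :=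
    fun u => aux_decomp hspec hV1 u η
  have hPD_iff : ∀ u : ℝ, (u • (1 : Matrix (Fin n) (Fin n) ℝ) - η • X).PosDef ↔
      ∀ i, 0 < u - η * lam i := by
    intro u
    rw [hdecomp u]
    exact aux_conj_posDef_iff hV1 hV2 _
  have htr_eq : ∀ u : ℝ, (∀ i, 0 < u - η * lam i) →
      ((u • (1 : Matrix (Fin n) (Fin n) ℝ) - η • X)⁻¹ ^ 2).trace =
        ∑ i, ((u - η * lam i)⁻¹)^2 := by
    intro u hu
    rw [hdecomp u, aux_conj_inv hV1 hV2 (fun i => ne_of_gt (hu i)), pow_two,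
      aux_conj_mul hV2, Matrix.diagonal_mul_diagonal, aux_conj_trace hV2,
      Matrix.trace_diagonal]
    try exact Finset.sum_congr rfl fun i _ => (pow_two _).symm
  constructor
  · obtain ⟨u₀, ⟨hu₀pos, hu₀eq⟩, hu₀uniq⟩ := aux_scalar hn lam η hη
    refine ⟨u₀, ⟨(hPD_iff u₀).mpr hu₀pos, by rw [htr_eq u₀ hu₀pos]; exact hu₀eq⟩, ?_⟩
    rintro v ⟨hvPD, hvtr⟩
    have hvpos := (hPD_iff v).mp hvPD
    exact hu₀uniq v ⟨hvpos, by rw [← htr_eq v hvpos]; exact hvtr⟩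
  · intro u hA htr
    set A : Matrix (Fin n) (Fin n) ℝ := u • (1 : Matrix (Fin n) (Fin n) ℝ) - η • X with hA_def
    have hdetA : IsUnit A.det := isUnit_iff_ne_zero.mpr (ne_of_gt hA.det_pos)
    have hAA : A * A⁻¹ = 1 := Matrix.mul_nonsing_inv A hdetA
    have hA'A : A⁻¹ * A = 1 := Matrix.nonsing_inv_mul A hdetA
    have hAinv_pd : A⁻¹.PosDef := hA.inv
    have hMps : (A⁻¹ ^ 2).PosSemidef := hAinv_pd.posSemidef.pow 2
    have hsqrtM : psdSqrt (A⁻¹ ^ 2) = A⁻¹ := by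
      exact psdSqrt_sq hAinv_pd.posSemidef
    -- the key trace identity
    have key : ∀ S : Matrix (Fin n) (Fin n) ℝ,
        (A * ((S - A⁻¹) * (S - A⁻¹))).trace =
          u * (S * S).trace - η * (X * (S * S)).trace - S.trace - S.trace + A⁻¹.trace := by
      intro S
      have expand : A * ((S - A⁻¹) * (S - A⁻¹)) =
          A * (S * S) - (A * S * A⁻¹) - ((A * A⁻¹) * S) + ((A * A⁻¹) * A⁻¹) := by
        noncomm_ring
      rw [expand, Matrix.trace_add, Matrix.trace_sub, Matrix.trace_sub, hAA,
        Matrix.one_mul, Matrix.one_mul]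
      have e2 : (A * S * A⁻¹).trace = S.trace := by
        rw [Matrix.trace_mul_comm (A * S) A⁻¹, ← Matrix.mul_assoc, hA'A, Matrix.one_mul]
      have e1 : (A * (S * S)).trace = u * (S * S).trace - η * (X * (S * S)).trace := by
        rw [hA_def, Matrix.sub_mul, smul_mul_assoc, Matrix.one_mul, smul_mul_assoc,
          Matrix.trace_sub, Matrix.trace_smul, Matrix.trace_smul, smul_eq_mul, smul_eq_mul]
      rw [e1, e2]
      try ring
    -- behaviour for an arbitrary density matrix
    have main : ∀ M' : Matrix (Fin n) (Fin n) ℝ, M'.PosSemidef → M'.trace = 1 →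
        ((X * M').trace + (2 / η) * (psdSqrt M').trace =
          (u + A⁻¹.trace - (A * ((psdSqrt M' - A⁻¹) * (psdSqrt M' - A⁻¹))).trace) / η) ∧
        0 ≤ (A * ((psdSqrt M' - A⁻¹) * (psdSqrt M' - A⁻¹))).trace ∧
        ((A * ((psdSqrt M' - A⁻¹) * (psdSqrt M' - A⁻¹))).trace = 0 → M' = A⁻¹ ^ 2) := by
      intro M' hM' htrM'
      set S : Matrix (Fin n) (Fin n) ℝ := psdSqrt M' with hS_def
      have hS : S.PosSemidef := by exact psdSqrt_posSemidef hM'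
      have hSS : S * S = M' := by exact psdSqrt_mul_self hM'
      have hD : (S - A⁻¹).IsHermitian := hS.1.sub hAinv_pd.isHermitian
      obtain ⟨hT0, hTz⟩ := aux_quad hA hD
      have hkey := key S
      rw [hSS, htrM'] at hkey
      refine ⟨?_, hT0, ?_⟩
      · have hinv : η * η⁻¹ = 1 := mul_inv_cancel₀ hη.ne'
        linear_combination (1/η) * hkey + (-(X * M').trace) * hinv
      · intro hT
        have hDz : S - A⁻¹ = 0 := hTz hT
        have : S = A⁻¹ := by
          have := sub_eq_zero.mp hDz
          exact this
        rw [← hSS, this, ← pow_two]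
    refine ⟨?_, ?_⟩
    · -- optimality and uniqueness of the optimizer
      intro M' hM' htrM'
      obtain ⟨hval, hT0, hTz⟩ := main M' hM' htrM'
      obtain ⟨hval₀, hT0₀, -⟩ := main (A⁻¹ ^ 2) hMps htr
      have hDzero : psdSqrt (A⁻¹ ^ 2) - A⁻¹ = 0 := by rw [hsqrtM, sub_self]
      have hval₀' : (X * (A⁻¹ ^ 2)).trace + (2 / η) * (psdSqrt (A⁻¹ ^ 2)).trace =
          (u + A⁻¹.trace) / η := by
        rw [hval₀, hDzero]
        simp only [Matrix.zero_mul, Matrix.mul_zero, Matrix.trace_zero, sub_zero]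
      constructor
      · rw [hval, hval₀']
        exact (div_le_div_iff_of_pos_right hη).mpr (by linarith)
      · intro heq
        rw [hval, hval₀'] at heq
        have heq2 := congrArg (· * η) heq
        simp only [div_mul_cancel₀ _ hη.ne'] at heq2
        exact hTz (by linarith)
    · -- the value of the potential
      obtain ⟨hval₀, -, -⟩ := main (A⁻¹ ^ 2) hMps htr
      have hDzero : psdSqrt (A⁻¹ ^ 2) - A⁻¹ = 0 := by rw [hsqrtM, sub_self]
      have hval₀' : (X * (A⁻¹ ^ 2)).trace + (2 / η) * (psdSqrt (A⁻¹ ^ 2)).trace =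
          (1 / η) * A⁻¹.trace + u / η := by
        rw [hval₀, hDzero]
        simp only [Matrix.zero_mul, Matrix.mul_zero, Matrix.trace_zero, sub_zero]
        ring
      have hgreat : IsGreatest {r : ℝ | ∃ M : Matrix (Fin n) (Fin n) ℝ, M.PosSemidef ∧
          M.trace = 1 ∧ r = (X * M).trace + (2 / η) * (psdSqrt M).trace}
          ((1 / η) * A⁻¹.trace + u / η) := by
        constructor
        · exact ⟨A⁻¹ ^ 2, hMps, htr, hval₀'.symm⟩
        · rintro r ⟨M', hM', htrM', rfl⟩
          obtain ⟨hval, hT0, -⟩ := main M' hM' htrM'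
          rw [hval, ← hval₀', hval₀, hDzero]
          simp only [Matrix.zero_mul, Matrix.mul_zero, Matrix.trace_zero, sub_zero]
          exact (div_le_div_iff_of_pos_right hη).mpr (by linarith)
      rw [potential]
      exact hgreat.csSup_eq
end
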